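/- Let ρ be a non-symmetric Finsler metric on an isometry-invariant open set G ⊆ H with 0 ∉ G. Then ρ is isometry-invariant if and only if there exists a function λ : (0,∞) × 𝔽 × ℝ → ℝ, written λ_r(p,q), such that: (1) λ_r(t·p, t·q) = t·λ_r(p,q) and λ_r(t·p, −t·q) = t·λ_r(p,q) for all r > 0, p ∈ 𝔽, q ∈ ℝ, and real t ≥ 0; and (2) ρ_g(h) = λ_{‖g‖}(⟨h,g⟩, √(‖h‖²·‖g‖² − |⟨h,g⟩|²)) for every g ∈ G and h ∈ H. -/

import Mathlib

section HelperA

open scoped InnerProductSpace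

open scoped InnerProductSpace

variable {𝕜 F : Type*} [RCLike 𝕜] [NormedAddCommGroup F] [InnerProductSpace 𝕜 F]

/-- In any inner product space, two pairs with the same Gram data admit a linear isometry
of the whole space onto itself (not nec. surjective info needed) mapping one to the other,
provided the space is finite-dimensional. -/
theorem exists_isometry_fd [FiniteDimensional 𝕜 F] (a b a' b' : F)
    (h1 : ‖a‖ = ‖a'‖) (h2 : ‖b‖ = ‖b'‖) (h3 : (inner 𝕜 a b : 𝕜) = inner 𝕜 a' b') :
    ∃ U : F →ₗᵢ[𝕜] F, U a = a' ∧ U b = b' := by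
  classical
  set φ : (𝕜 × 𝕜) →ₗ[𝕜] F :=
    (LinearMap.toSpanSingleton 𝕜 F a).coprod (LinearMap.toSpanSingleton 𝕜 F b) with hφ
  set φ' : (𝕜 × 𝕜) →ₗ[𝕜] F :=
    (LinearMap.toSpanSingleton 𝕜 F a').coprod (LinearMap.toSpanSingleton 𝕜 F b') with hφ'
  have hval : ∀ v : 𝕜 × 𝕜, φ v = v.1 • a + v.2 • b := fun v => rfl
  have hval' : ∀ v : 𝕜 × 𝕜, φ' v = v.1 • a' + v.2 • b' := fun v => rfl
  have hnorm : ∀ v : 𝕜 × 𝕜, ‖φ v‖ = ‖φ' v‖ := by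
    intro v
    have e1 : ‖φ v‖ ^ 2 = ‖φ' v‖ ^ 2 := by
      rw [hval, hval', @norm_add_sq 𝕜, @norm_add_sq 𝕜]
      simp only [inner_smul_left, inner_smul_right, norm_smul, h3, h1, h2]
    have := sq_nonneg (‖φ v‖); nlinarith [norm_nonneg (φ v), norm_nonneg (φ' v)]
  have hker : LinearMap.ker φ ≤ LinearMap.ker φ' := by
    intro v hv
    simp only [LinearMap.mem_ker] at hv ⊢
    have := hnorm v
    rw [hv, norm_zero] at this
    exact norm_eq_zero.mp this.symm
  set L0 : LinearMap.range φ →ₗ[𝕜] F :=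
    ((LinearMap.ker φ).liftQ φ' hker).comp φ.quotKerEquivRange.symm.toLinearMap with hL0
  have hL0val : ∀ v : 𝕜 × 𝕜, ∀ hmem, L0 ⟨φ v, hmem⟩ = φ' v := by
    intro v hmem
    have : φ.quotKerEquivRange.symm ⟨φ v, hmem⟩ = (LinearMap.ker φ).mkQ v :=
      φ.quotKerEquivRange_symm_apply_image v hmem
    simp [hL0, this]
  have hL0iso : ∀ s : LinearMap.range φ, ‖L0 s‖ = ‖s‖ := by
    rintro ⟨x, hx⟩
    obtain ⟨v, rfl⟩ := hx
    rw [hL0val v ⟨v, rfl⟩, ← hnorm v]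
    rfl
  set L : (LinearMap.range φ) →ₗᵢ[𝕜] F := ⟨L0, hL0iso⟩ with hL
  refine ⟨L.extend, ?_, ?_⟩
  · have hφa : φ (1, 0) = a := by simp [hval]
    have ha : a ∈ LinearMap.range φ := ⟨(1, 0), hφa⟩
    have hext := L.extend_apply ⟨a, ha⟩
    have hLa : L ⟨a, ha⟩ = a' := by
      have hv : (⟨a, ha⟩ : LinearMap.range φ) = ⟨φ (1, 0), LinearMap.mem_range_self φ (1,0)⟩ := by simp [hφa]
      rw [hv]
      show L0 ⟨φ (1,0), _⟩ = a'
      rw [hL0val]; simp [hval']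
    rw [hLa] at hext; exact hext
  · have hφb : φ (0, 1) = b := by simp [hval]
    have hb : b ∈ LinearMap.range φ := ⟨(0, 1), hφb⟩
    have hext := L.extend_apply ⟨b, hb⟩
    have hLb : L ⟨b, hb⟩ = b' := by
      have hv : (⟨b, hb⟩ : LinearMap.range φ) = ⟨φ (0, 1), LinearMap.mem_range_self φ (0,1)⟩ := by simp [hφb]
      rw [hv]
      show L0 ⟨φ (0,1), _⟩ = b'
      rw [hL0val]; simp [hval']
    rw [hLb] at hext; exact hext

end HelperA

section HelperB

open scoped InnerProductSpace

open scoped InnerProductSpace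

variable {𝕜 H : Type*} [RCLike 𝕜] [NormedAddCommGroup H] [InnerProductSpace 𝕜 H]

theorem exists_extend_by_id (W : Submodule 𝕜 H) [FiniteDimensional 𝕜 W]
    (U : W →ₗᵢ[𝕜] W) : ∃ T : H →ₗᵢ[𝕜] H, ∀ w : W, T w = U w := by
  haveI : CompleteSpace W := FiniteDimensional.complete 𝕜 W
  set P : H →ₗ[𝕜] W := W.orthogonalProjectionOnto.toLinearMap with hP
  set Tlin : H →ₗ[𝕜] H :=
    W.subtype.comp (U.toLinearMap.comp P) + (LinearMap.id - W.subtype.comp P) with hT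
  have hTval : ∀ x : H, Tlin x = (U (W.orthogonalProjectionOnto x) : H)
      + (x - W.orthogonalProjectionOnto x) := fun x => rfl
  have hnorm : ∀ x : H, ‖Tlin x‖ = ‖x‖ := by
    intro x
    rw [hTval]
    have hmem : (x - W.orthogonalProjectionOnto x) ∈ Wᗮ :=
      W.sub_starProjection_mem_orthogonal x
    have h1 : (inner 𝕜 ((U (W.orthogonalProjectionOnto x)) : H) (x - W.orthogonalProjectionOnto x) : 𝕜)
        = 0 := hmem _ (U (W.orthogonalProjectionOnto x)).2
    have h2 : (inner 𝕜 ((W.orthogonalProjectionOnto x : H)) (x - W.orthogonalProjectionOnto x) : 𝕜)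
        = 0 := hmem _ (W.orthogonalProjectionOnto x).2
    have e1 := norm_add_sq_eq_norm_sq_add_norm_sq_of_inner_eq_zero _ _ h1
    have e2 := norm_add_sq_eq_norm_sq_add_norm_sq_of_inner_eq_zero
      ((W.orthogonalProjectionOnto x : H)) _ h2
    have e3 : (W.orthogonalProjectionOnto x : H) + (x - W.orthogonalProjectionOnto x) = x := by abel
    rw [e3] at e2
    have e4 : ‖(U (W.orthogonalProjectionOnto x) : H)‖ = ‖(W.orthogonalProjectionOnto x : H)‖ := by
      rw [Submodule.norm_coe, Submodule.norm_coe]  -- maybe wrong names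
      exact U.norm_map _
    have e5 : ‖(U (W.orthogonalProjectionOnto x) : H) + (x - W.orthogonalProjectionOnto x)‖
        * ‖(U (W.orthogonalProjectionOnto x) : H) + (x - W.orthogonalProjectionOnto x)‖
        = ‖x‖ * ‖x‖ := by rw [e1, e4, e2]
    exact (mul_self_inj (norm_nonneg _) (norm_nonneg _)).mp e5
  refine ⟨⟨Tlin, hnorm⟩, ?_⟩
  intro w
  show Tlin w = U w
  rw [hTval]
  rw [Submodule.orthogonalProjectionOnto_mem_subspace_eq_self w]
  simp

theorem exists_isometry_of_gram (g h g' h' : H)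
    (h1 : ‖g‖ = ‖g'‖) (h2 : ‖h‖ = ‖h'‖) (h3 : (inner 𝕜 g h : 𝕜) = inner 𝕜 g' h') :
    ∃ T : H →ₗᵢ[𝕜] H, T g = g' ∧ T h = h' := by
  classical
  set W : Submodule 𝕜 H := Submodule.span 𝕜 {g, h, g', h'} with hW
  haveI : FiniteDimensional 𝕜 W := by
    exact FiniteDimensional.span_of_finite 𝕜 (Set.toFinite _)
  have hgW : g ∈ W := Submodule.subset_span (by simp)
  have hhW : h ∈ W := Submodule.subset_span (by simp)
  have hg'W : g' ∈ W := Submodule.subset_span (by simp)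
  have hh'W : h' ∈ W := Submodule.subset_span (by simp)
  obtain ⟨U, hUa, hUb⟩ := exists_isometry_fd (𝕜 := 𝕜) (⟨g, hgW⟩ : W) ⟨h, hhW⟩ ⟨g', hg'W⟩
    ⟨h', hh'W⟩ (by simpa using h1)
    (by simpa using h2)
    (by rwa [Submodule.coe_inner, Submodule.coe_inner])
  obtain ⟨T, hT⟩ := exists_extend_by_id W U
  refine ⟨T, ?_, ?_⟩
  · have := hT ⟨g, hgW⟩
    rw [hUa] at this
    exact this
  · have := hT ⟨h, hhW⟩
    rw [hUb] at this
    exact this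

end HelperB

/-- `G` is an isometry-invariant open set in `H`: `G = {x : ‖x‖ ∈ R}` for some open
subset `R` of `[0,∞)`. -/
def IsInvariantOpen {H : Type*} [NormedAddCommGroup H] (G : Set H) : Prop :=
  ∃ R : Set ℝ, IsOpen {r : Set.Ici (0 : ℝ) | (r : ℝ) ∈ R} ∧ G = {x : H | ‖x‖ ∈ R}

/-- a non-symmetric Finsler metric `ρ` on an isometry-invariant open set
`G` with `0 ∉ G` is isometry-invariant iff there is `λ : (0,∞) × 𝔽 × ℝ → ℝ` with
`λ_r(tp, ±tq) = t λ_r(p,q)` for `t ≥ 0`, and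
`ρ_g(h) = λ_{‖g‖}(⟨h,g⟩, √(‖h‖²‖g‖² − |⟨h,g⟩|²))`.  (The paper's inner product
`⟨h,g⟩`, linear in `h`, is Mathlib's `inner g h`.) -/
theorem stmt15 {𝕜 H : Type*} [RCLike 𝕜] [NormedAddCommGroup H] [InnerProductSpace 𝕜 H]
    (G : Set H) (hG : IsInvariantOpen G) (h0G : (0 : H) ∉ G)
    (ρ : H → H → ℝ)
    (hFinsler : ∀ g ∈ G, ∀ h : H, ∀ r : ℝ, 0 ≤ r → ρ g ((r : 𝕜) • h) = r * ρ g h) :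
    (∀ T : H →ₗᵢ[𝕜] H, ∀ g ∈ G, ∀ h : H, ρ (T g) (T h) = ρ g h) ↔
      ∃ lam : ℝ → 𝕜 → ℝ → ℝ,
        (∀ r > (0 : ℝ), ∀ (p : 𝕜) (q : ℝ), ∀ t : ℝ, 0 ≤ t →
          lam r ((t : 𝕜) * p) (t * q) = t * lam r p q ∧
          lam r ((t : 𝕜) * p) (-(t * q)) = t * lam r p q) ∧
        (∀ g ∈ G, ∀ h : H,
          ρ g h = lam ‖g‖ (inner 𝕜 g h : 𝕜)
            (Real.sqrt (‖h‖ ^ 2 * ‖g‖ ^ 2 - ‖(inner 𝕜 g h : 𝕜)‖ ^ 2))) := by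
  classical
  obtain ⟨R, -, hGR⟩ := hG
  have hnormG : ∀ x : H, x ∈ G → ∀ y : H, ‖y‖ = ‖x‖ → y ∈ G := by
    intro x hx y hy
    rw [hGR] at hx ⊢
    simpa [hy] using hx
  have hGpos : ∀ g ∈ G, (0:ℝ) < ‖g‖ := by
    intro g hg
    rcases eq_or_ne g 0 with rfl | hne
    · exact absurd hg h0G
    · exact norm_pos_iff.mpr hne
  constructor
  · intro hinv
    -- key transport lemma
    have hkey : ∀ g ∈ G, ∀ h g' h' : H, ‖g‖ = ‖g'‖ → ‖h‖ = ‖h'‖ →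
        (inner 𝕜 g h : 𝕜) = inner 𝕜 g' h' → ρ g h = ρ g' h' := by
      intro g hg h g' h' e1 e2 e3
      obtain ⟨T, hTg, hTh⟩ := exists_isometry_of_gram g h g' h' e1 e2 e3
      have := hinv T g hg h
      rw [hTg, hTh] at this
      exact this.symm
    set Pred : ℝ → 𝕜 → ℝ → Prop := fun r p q =>
      ∃ x : H × H, x.1 ∈ G ∧ ‖x.1‖ = r ∧ (inner 𝕜 x.1 x.2 : 𝕜) = p ∧
        Real.sqrt (‖x.2‖ ^ 2 * r ^ 2 - ‖p‖ ^ 2) = q with hPred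
    set lamAux : ℝ → 𝕜 → ℝ → ℝ := fun r p q =>
      if hc : Pred r p q then ρ (Classical.choose hc).1 (Classical.choose hc).2 else 0
      with hlamAux
    -- value of lamAux against any witness
    have hAux_eq : ∀ r (p : 𝕜) (q : ℝ), Pred r p q → ∀ g ∈ G, ‖g‖ = r → ∀ h : H,
        (inner 𝕜 g h : 𝕜) = p → Real.sqrt (‖h‖ ^ 2 * r ^ 2 - ‖p‖ ^ 2) = q →
        lamAux r p q = ρ g h := by
      intro r p q hc g hg hgr h hip hq
      have hrpos : (0:ℝ) < r := hgr ▸ hGpos g hg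
      obtain ⟨hc1, hc2, hc3, hc4⟩ := Classical.choose_spec hc
      set c := Classical.choose hc
      have hv : lamAux r p q = ρ c.1 c.2 := dif_pos hc
      -- radicands are nonnegative (Cauchy-Schwarz)
      have cs1 : ‖p‖ ≤ r * ‖h‖ := by
        rw [← hip, ← hgr]; exact norm_inner_le_norm g h
      have cs2 : ‖p‖ ≤ r * ‖c.2‖ := by
        rw [← hc3, ← hc2]; exact norm_inner_le_norm c.1 c.2
      have r1 : (0:ℝ) ≤ ‖h‖ ^ 2 * r ^ 2 - ‖p‖ ^ 2 := by
        nlinarith [norm_nonneg p, norm_nonneg h]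
      have r2 : (0:ℝ) ≤ ‖c.2‖ ^ 2 * r ^ 2 - ‖p‖ ^ 2 := by
        nlinarith [norm_nonneg p, norm_nonneg c.2]
      have hrad : ‖c.2‖ ^ 2 * r ^ 2 - ‖p‖ ^ 2 = ‖h‖ ^ 2 * r ^ 2 - ‖p‖ ^ 2 :=
        (Real.sqrt_inj r2 r1).mp (by rw [hc4, hq])
      have hnc2 : ‖c.2‖ = ‖h‖ := by
        have hx : ‖c.2‖ ^ 2 * r ^ 2 = ‖h‖ ^ 2 * r ^ 2 := by linarith
        have h1 : ‖c.2‖ ^ 2 = ‖h‖ ^ 2 :=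
          mul_right_cancel₀ (pow_ne_zero 2 (ne_of_gt hrpos)) hx
        calc ‖c.2‖ = Real.sqrt (‖c.2‖ ^ 2) := (Real.sqrt_sq (norm_nonneg _)).symm
          _ = Real.sqrt (‖h‖ ^ 2) := by rw [h1]
          _ = ‖h‖ := Real.sqrt_sq (norm_nonneg _)
      rw [hv]
      exact (hkey g hg h c.1 c.2 (by rw [hgr, hc2]) hnc2.symm (by rw [hip, hc3])).symm
    -- scaling of witnesses
    have hwit : ∀ (g h : H) (r : ℝ) (p : 𝕜) (q t : ℝ), 0 ≤ t →
        (inner 𝕜 g h : 𝕜) = p → Real.sqrt (‖h‖ ^ 2 * r ^ 2 - ‖p‖ ^ 2) = q →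
        (inner 𝕜 g ((t : 𝕜) • h) : 𝕜) = (t : 𝕜) * p ∧
        Real.sqrt (‖(t : 𝕜) • h‖ ^ 2 * r ^ 2 - ‖(t : 𝕜) * p‖ ^ 2) = t * q := by
      intro g h r p q t ht hip hq
      constructor
      · rw [inner_smul_right, hip]
      · have h1 : ‖(t : 𝕜) • h‖ = t * ‖h‖ := by
          rw [norm_smul, RCLike.norm_ofReal, abs_of_nonneg ht]
        have h2 : ‖(t : 𝕜) * p‖ = t * ‖p‖ := by
          rw [norm_mul, RCLike.norm_ofReal, abs_of_nonneg ht]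
        have h3 : ‖(t : 𝕜) • h‖ ^ 2 * r ^ 2 - ‖(t : 𝕜) * p‖ ^ 2
            = t ^ 2 * (‖h‖ ^ 2 * r ^ 2 - ‖p‖ ^ 2) := by rw [h1, h2]; ring
        rw [h3, Real.sqrt_mul (sq_nonneg t), Real.sqrt_sq ht, hq]
    -- scaling of the predicate
    have hPred_scale : ∀ (r : ℝ) (p : 𝕜) (q t : ℝ), 0 ≤ t → Pred r p q →
        Pred r ((t : 𝕜) * p) (t * q) := by
      rintro r p q t ht ⟨⟨g, h⟩, hgG, hgr, hip, hq⟩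
      exact ⟨(g, (t : 𝕜) • h), hgG, hgr, (hwit g h r p q t ht hip hq).1,
        (hwit g h r p q t ht hip hq).2⟩
    -- homogeneity of lamAux
    have hAux_hom : ∀ r > (0:ℝ), ∀ (p : 𝕜) (q : ℝ), ∀ t : ℝ, 0 ≤ t →
        lamAux r ((t : 𝕜) * p) (t * q) = t * lamAux r p q := by
      intro r hr p q t ht
      rcases eq_or_lt_of_le ht with rfl | htpos
      · -- t = 0
        have e0 : ((0:ℝ) : 𝕜) * p = 0 := by push_cast; ring
        have e0' : (0:ℝ) * q = 0 := by ring
        rw [e0, e0', zero_mul]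
        by_cases hc : Pred r (0 : 𝕜) (0 : ℝ)
        · obtain ⟨hc1, hc2, hc3, hc4⟩ := Classical.choose_spec hc
          set c := Classical.choose hc
          have hv : lamAux r 0 0 = ρ c.1 c.2 := dif_pos hc
          have hrpos : (0:ℝ) < r := hc2 ▸ hGpos c.1 hc1
          have hc20 : c.2 = 0 := by
            have h4 : ‖c.2‖ ^ 2 * r ^ 2 - ‖(0:𝕜)‖ ^ 2 ≤ 0 := Real.sqrt_eq_zero'.mp hc4
            simp only [norm_zero] at h4
            have h5 : ‖c.2‖ ^ 2 * r ^ 2 = 0 := le_antisymm (by linarith) (by positivity)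
            have h6 : ‖c.2‖ ^ 2 = 0 := by
              rcases mul_eq_zero.mp h5 with hcase | hcase
              · exact hcase
              · exact absurd hcase (by positivity)
            have h7 : ‖c.2‖ = 0 := by
              have := pow_eq_zero_iff (n := 2) (by norm_num) |>.mp h6
              exact this
            exact norm_eq_zero.mp h7
          rw [hv, hc20]
          have := hFinsler c.1 hc1 0 0 le_rfl
          simpa using this
        · rw [hlamAux]; simp only [dif_neg hc]
      · -- t > 0
        by_cases hc : Pred r p q
        · obtain ⟨hc1, hc2, hc3, hc4⟩ := Classical.choose_spec hc
          set c := Classical.choose hc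
          have hv : lamAux r p q = ρ c.1 c.2 := dif_pos hc
          have hc' : Pred r ((t : 𝕜) * p) (t * q) := hPred_scale r p q t ht hc
          have hw := hwit c.1 c.2 r p q t ht hc3 hc4
          have := hAux_eq r ((t : 𝕜) * p) (t * q) hc' c.1 hc1 hc2 ((t : 𝕜) • c.2) hw.1 hw.2
          rw [this, hv, hFinsler c.1 hc1 c.2 t ht]
        · have hc' : ¬ Pred r ((t : 𝕜) * p) (t * q) := by
            intro hc'
            apply hc
            have := hPred_scale r ((t : 𝕜) * p) (t * q) t⁻¹ (le_of_lt (inv_pos.mpr htpos)) hc'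
            have ht0 : (t : 𝕜) ≠ 0 := by
              exact_mod_cast ne_of_gt htpos
            have e1 : ((t⁻¹ : ℝ) : 𝕜) * ((t : 𝕜) * p) = p := by
              push_cast
              rw [← mul_assoc, inv_mul_cancel₀ ht0, one_mul]
            have e2 : t⁻¹ * (t * q) = q := by field_simp
            rwa [e1, e2] at this
          rw [hlamAux]
          simp only [dif_neg hc, dif_neg hc', mul_zero]
    -- assemble lam
    refine ⟨fun r p q => lamAux r p |q|, ?_, ?_⟩
    · intro r hr p q t ht
      constructor
      · have h1 : |t * q| = t * |q| := by rw [abs_mul, abs_of_nonneg ht]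
        show lamAux r ((t : 𝕜) * p) |t * q| = t * lamAux r p |q|
        rw [h1]
        exact hAux_hom r hr p |q| t ht
      · have h1 : |(-(t * q))| = t * |q| := by rw [abs_neg, abs_mul, abs_of_nonneg ht]
        show lamAux r ((t : 𝕜) * p) |(-(t * q))| = t * lamAux r p |q|
        rw [h1]
        exact hAux_hom r hr p |q| t ht
    · intro g hg h
      set r := ‖g‖
      set p : 𝕜 := inner 𝕜 g h
      set q := Real.sqrt (‖h‖ ^ 2 * r ^ 2 - ‖p‖ ^ 2)
      have hq0 : 0 ≤ q := Real.sqrt_nonneg _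
      have habs : |q| = q := abs_of_nonneg hq0
      have hc : Pred r p q := ⟨(g, h), hg, rfl, rfl, rfl⟩
      show ρ g h = lamAux r p |q|
      rw [habs]
      exact (hAux_eq r p q hc g hg rfl h rfl rfl).symm
  · rintro ⟨lam, -, h2⟩ T g hg h
    have hTgG : T g ∈ G := hnormG g hg (T g) (T.norm_map g)
    rw [h2 g hg h, h2 (T g) hTgG (T h)]
    simp [T.norm_map, T.inner_map_map]
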